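/- Let G = (V,(c_{xy})) be a finite weighted graph, α positive site weights, ω nonnegative killing rates, and k ≥ 2. Define the lookdown generator on ℝ^{V^k} by 𝓛_{G,α,ω,k} φ(x₁,…,x_k) = Σ_{i=1}^k Σ_{x,y∈V} c_{xy} 1{x = x_i} (α_y + 2·Σ_{j=1}^{i−1} 1{y = x_j}) (φ(x^{i→y}) − φ(x)) − φ(x)·Σ_{i=1}^k ω_{x_i}, where x^{i→y} replaces the i-th coordinate of x = (x₁,…,x_k) by y. Let Φ_k(x) = Σ_{i=1}^k δ_{x_i} ∈ Ξ_k and let S_k φ(x) = (1/k!) Σ_{σ∈Sym(k)} φ(x_{σ(1)},…,x_{σ(k)}) be the symmetrization operator. Then for every f : Ξ_k → ℝ, S_k( 𝓛_{G,α,ω,k}(f ∘ Φ_k) ) = (L_{G,α,ω,k} f) ∘ Φ_k. -/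

import Mathlib

open scoped BigOperators Classical

noncomputable section

/-- The configuration space of `k` particles on the finite site set `V`. -/
def Config (V : Type*) [Fintype V] (k : ℕ) : Type _ :=
  {η : V → ℕ // ∑ x, η x = k}

namespace Config

variable {V : Type*} [Fintype V] [DecidableEq V] {k : ℕ}

lemma apply_le (η : Config V k) (x : V) : η.1 x ≤ k := by
  have h := Finset.single_le_sum (f := η.1) (fun i _ => Nat.zero_le _) (Finset.mem_univ x)
  simpa [η.2] using h

instance instFintype : Fintype (Config V k) :=
  Fintype.ofInjective
    (fun η : Config V k => (fun x => (⟨η.1 x, Nat.lt_succ_of_le (η.apply_le x)⟩ : Fin (k+1))))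
    (fun a b hab => Subtype.ext (funext fun x => congrArg Fin.val (congrFun hab x)))

/-- The configuration `η - δ_x + δ_y` (move a particle from `x` to `y`);
by convention it is `η` itself when `η` has no particle at `x`. -/
def move (η : Config V k) (x y : V) : Config V k :=
  if h : η.1 x = 0 then η else
    ⟨fun z => η.1 z - (if z = x then 1 else 0) + (if z = y then 1 else 0), by
      have hle : ∀ z : V, (if z = x then 1 else 0) ≤ η.1 z := fun z => by
        by_cases hz : z = x
        · simpa [hz] using Nat.one_le_iff_ne_zero.2 h
        · simp [hz]
      have cast_term : ∀ z : V,
          ((η.1 z - (if z = x then 1 else 0) + (if z = y then 1 else 0) : ℕ) : ℤ)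
            = (η.1 z : ℤ) - (if z = x then 1 else 0) + (if z = y then 1 else 0) := by
        intro z
        rw [Nat.cast_add, Nat.cast_sub (hle z)]
        by_cases hz : z = x <;> by_cases hz' : z = y <;> simp [hz, hz']
      have key : ((∑ z, (η.1 z - (if z = x then 1 else 0) + (if z = y then 1 else 0)) : ℕ) : ℤ)
          = (k : ℤ) := by
        rw [Nat.cast_sum]
        rw [Finset.sum_congr rfl (fun z _ => cast_term z)]
        rw [Finset.sum_add_distrib, Finset.sum_sub_distrib]
        have h1 : (∑ z, (η.1 z : ℤ)) = (k : ℤ) := by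
          rw [← Nat.cast_sum, η.2]
        rw [h1]
        simp
      exact_mod_cast key⟩

/-- The configuration `η + δ_x`. -/
def addOne (η : Config V k) (x : V) : Config V (k + 1) :=
  ⟨fun z => η.1 z + (if z = x then 1 else 0), by
    rw [Finset.sum_add_distrib, η.2]
    simp⟩

end Config

section Defs

variable {V : Type*} [Fintype V] [DecidableEq V]

/-- The configuration with `k` particles stacked at `x`. -/
def stackConfig (V : Type*) [Fintype V] [DecidableEq V] (k : ℕ) (x : V) : Config V k :=
  ⟨fun z => if z = x then k else 0, by simp⟩

/-- Normalization constant `Z_{α,k}`. -/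
def sipZ (α : V → ℝ) (k : ℕ) : ℝ :=
  Real.Gamma ((∑ x, α x) + k) / (Real.Gamma (∑ x, α x) * (Nat.factorial k))

/-- The reversible (Dirichlet-multinomial) measure `μ_{α,k}` of SIP. -/
def sipMeasure (α : V → ℝ) {k : ℕ} (η : Config V k) : ℝ :=
  (sipZ α k)⁻¹ * ∏ x, Real.Gamma (α x + η.1 x) / (Real.Gamma (α x) * (Nat.factorial (η.1 x)))

/-- The Dirichlet form of `SIP_k(G, α)`. -/
def dirichletForm (c : V → V → ℝ) (α : V → ℝ) {k : ℕ} (f : Config V k → ℝ) : ℝ :=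
  (1 / 2) * ∑ η : Config V k, ∑ x, ∑ y,
    sipMeasure α η * (c x y * η.1 x * (α y + η.1 y) * (f (η.move x y) - f η) ^ 2)

/-- Mean of `f` under `μ_{α,k}`. -/
def sipMean (α : V → ℝ) {k : ℕ} (f : Config V k → ℝ) : ℝ :=
  ∑ η : Config V k, sipMeasure α η * f η

/-- Variance of `f` under `μ_{α,k}`. -/
def sipVar (α : V → ℝ) {k : ℕ} (f : Config V k → ℝ) : ℝ :=
  ∑ η : Config V k, sipMeasure α η * (f η - sipMean α f) ^ 2

/-- Squared `L²(μ_{α,k})`-norm of `f`. -/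
def sipNormSq (α : V → ℝ) {k : ℕ} (f : Config V k → ℝ) : ℝ :=
  ∑ η : Config V k, sipMeasure α η * (f η) ^ 2

/-- The spectral gap `gap_k(G,α)` of the `k`-particle SIP. -/
def sipGap (c : V → V → ℝ) (α : V → ℝ) (k : ℕ) : ℝ :=
  sInf {r : ℝ | ∃ f : Config V k → ℝ, (∃ η ζ : Config V k, f η ≠ f ζ) ∧
    r = dirichletForm c α f / sipVar α f}

/-- `gap_SIP(G,α) = inf_{k ≥ 2} gap_k(G,α)`. -/
def sipGapInf (c : V → V → ℝ) (α : V → ℝ) : ℝ :=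
  sInf {r : ℝ | ∃ k : ℕ, 2 ≤ k ∧ r = sipGap c α k}

/-- The simple graph underlying a symmetric family of conductances. -/
def graphOf (c : V → V → ℝ) : SimpleGraph V where
  Adj x y := x ≠ y ∧ (0 < c x y ∨ 0 < c y x)
  symm := ⟨fun x y h => ⟨h.1.symm, h.2.symm⟩⟩
  loopless := ⟨fun x h => h.1 rfl⟩

/-- The diameter of the weighted graph: maximal graph distance between two sites. -/
def graphDiam (c : V → V → ℝ) : ℕ :=
  Finset.univ.sup (fun p : V × V => (graphOf c).dist p.1 p.2)

/-- The minimal positive conductance. -/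
def cMin (c : V → V → ℝ) : ℝ :=
  sInf {r : ℝ | 0 < r ∧ ∃ x y, c x y = r}

/-- Minimal site weight. -/
def alphaMin (α : V → ℝ) : ℝ := sInf (Set.range α)

/-- Maximal site weight. -/
def alphaMax (α : V → ℝ) : ℝ := sSup (Set.range α)

/-- Conductances of the complete graph on `V`. -/
def completeCond (V : Type*) [DecidableEq V] : V → V → ℝ :=
  fun x y => if x = y then 0 else 1

/-- The generator matrix of `SIP_k(G,α)` acting on `ℝ^{Ξ_k}` by `mulVec`. -/
def sipMatrix (c : V → V → ℝ) (α : V → ℝ) (k : ℕ) : Matrix (Config V k) (Config V k) ℝ :=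
  fun η ζ => ∑ x, ∑ y, c x y * η.1 x * (α y + η.1 y) *
    ((if η.move x y = ζ then 1 else 0) - (if ζ = η then 1 else 0))

/-- The generator matrix `A_{β,k}` of `k` independent random walks. -/
def rwPartMatrix (c : V → V → ℝ) (β : V → ℝ) (k : ℕ) : Matrix (Config V k) (Config V k) ℝ :=
  fun η ζ => ∑ x, ∑ y, c x y * η.1 x * β y *
    ((if η.move x y = ζ then 1 else 0) - (if ζ = η then 1 else 0))

/-- The generator matrix `B_k` of the pure interaction (fast) dynamics. -/
def clumpMatrix (c : V → V → ℝ) (k : ℕ) : Matrix (Config V k) (Config V k) ℝ :=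
  fun η ζ => ∑ x, ∑ y, c x y * η.1 x * η.1 y *
    ((if η.move x y = ζ then 1 else 0) - (if ζ = η then 1 else 0))

/-- The generator matrix of the purely absorbing (killed) SIP. -/
def killedMatrix (c : V → V → ℝ) (α ω : V → ℝ) (k : ℕ) :
    Matrix (Config V k) (Config V k) ℝ :=
  fun η ζ => sipMatrix c α k η ζ - (if ζ = η then ∑ x, ω x * η.1 x else 0)

/-- `η ∈ Ω_k`: absorbing configurations for the fast dynamics. -/
def inOmega (c : V → V → ℝ) {k : ℕ} (η : Config V k) : Prop :=
  ∀ x y, c x y * η.1 x * η.1 y = 0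

/-- The number of occupied sites (stacks) of a configuration. -/
def numStacks {k : ℕ} (η : Config V k) : ℕ :=
  (Finset.univ.filter fun x => 0 < η.1 x).card

/-- Jump rates of `k` independent random walks: `r^A(η,ζ)`. -/
def rateA (c : V → V → ℝ) (β : V → ℝ) {k : ℕ} (η ζ : Config V k) : ℝ :=
  ∑ x, ∑ y, if η.1 x ≠ 0 ∧ η.move x y = ζ then c x y * η.1 x * β y else 0

/-- Metastable jump rates `r^M(η,ξ) = Σ_ζ r^A(η,ζ) h_ξ(ζ)`, given absorption
probabilities `h`. -/
def rateM (c : V → V → ℝ) (β : V → ℝ) {k : ℕ} (h : Config V k → Config V k → ℝ)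
    (η ξ : Config V k) : ℝ :=
  ∑ ζ, rateA c β η ζ * h ξ ζ

/-- The metastable generator on `Ω_k`, given absorption probabilities `h`. -/
def metaGen (c : V → V → ℝ) (β : V → ℝ) {k : ℕ} (h : Config V k → Config V k → ℝ)
    (g : Config V k → ℝ) (η : Config V k) : ℝ :=
  ∑ ξ, if inOmega c ξ ∧ ξ ≠ η then rateM c β h η ξ * (g ξ - g η) else 0

/-- The (restricted) annihilation operator `â_{k+1} g (η) = Σ_x η_x g(η - δ_x)`. -/
def annihilate {k : ℕ} (g : Config V k → ℝ) (η : Config V (k + 1)) : ℝ :=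
  ∑ x, ∑ ξ : Config V k, if ξ.addOne x = η then (η.1 x : ℝ) * g ξ else 0

/-- The SIP generator as an operator on functions. -/
def sipGen (c : V → V → ℝ) (α : V → ℝ) {k : ℕ} (f : Config V k → ℝ) (η : Config V k) : ℝ :=
  ∑ x, ∑ y, c x y * η.1 x * (α y + η.1 y) * (f (η.move x y) - f η)

/-- The purely absorbing (killed) SIP generator. -/
def killedGen (c : V → V → ℝ) (α ω : V → ℝ) {k : ℕ} (f : Config V k → ℝ)
    (η : Config V k) : ℝ :=
  sipGen c α f η - f η * ∑ x, ω x * η.1 x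

/-- Spectral gap of the killed `k`-particle SIP (Rayleigh quotient infimum). -/
def killedGap (c : V → V → ℝ) (α ω : V → ℝ) (k : ℕ) : ℝ :=
  sInf {r : ℝ | ∃ f : Config V k → ℝ, f ≠ 0 ∧
    r = (∑ η, sipMeasure α η * f η * (-(killedGen c α ω f η))) / sipNormSq α f}

/-- `λ_{k,k}(β)`: the variational bottom eigenvalue of `k` independent walks killed
upon two particles becoming adjacent. -/
def lamLevel (c : V → V → ℝ) (β : V → ℝ) (k : ℕ) : ℝ :=
  sInf {r : ℝ | ∃ f : Config V k → ℝ, f ≠ 0 ∧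
    (∀ η : Config V k, ¬(inOmega c η ∧ numStacks η = k) → f η = 0) ∧
    r = dirichletForm c β f / sipNormSq β f}


/-- The symmetrizing measure `ς_{β,k,m}` on stack configurations. -/
def stackMeasure (β : V → ℝ) {k : ℕ} (η : Config V k) : ℝ :=
  ∏ x, if 0 < η.1 x then β x / η.1 x else 1

/-- The lookdown generator of the SIP with killing, on labeled configurations. -/
def lookdownGen (c : V → V → ℝ) (α ω : V → ℝ) (k : ℕ) (φ : (Fin k → V) → ℝ)
    (v : Fin k → V) : ℝ :=
  (∑ i : Fin k, ∑ x, ∑ y, c x y * (if x = v i then 1 else 0) *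
      (α y + 2 * ∑ j : Fin k, (if (j : ℕ) < (i : ℕ) ∧ v j = y then 1 else 0)) *
      (φ (Function.update v i y) - φ v))
    - φ v * ∑ i, ω (v i)

/-- The unlabeling map `Φ_k` from labeled to unlabeled configurations. -/
def unlabel {k : ℕ} (v : Fin k → V) : Config V k :=
  ⟨fun z => (Finset.univ.filter fun i => v i = z).card, by
    have h := Finset.card_eq_sum_card_fiberwise
      (f := v) (s := Finset.univ) (t := Finset.univ) (fun i _ => Finset.mem_univ _)
    simpa using h.symm⟩

/-- The symmetrization operator `S_k`. -/
def symmetrize (k : ℕ) (φ : (Fin k → V) → ℝ) (v : Fin k → V) : ℝ :=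
  (1 / (Nat.factorial k : ℝ)) * ∑ σ : Equiv.Perm (Fin k), φ (fun i => v (σ i))

/-- `η + δ_x` on the full configuration space `ℕ^V`. -/
def addFn (η : V → ℕ) (x : V) : V → ℕ := fun z => η z + (if z = x then 1 else 0)

/-- `η - δ_x` on the full configuration space (truncated subtraction). -/
def remFn (η : V → ℕ) (x : V) : V → ℕ := fun z => η z - (if z = x then 1 else 0)

/-- `η - δ_x + δ_y` on the full configuration space; `η` itself when `η x = 0`. -/
def moveFn (η : V → ℕ) (x y : V) : V → ℕ :=
  if η x = 0 then η else fun z => η z - (if z = x then 1 else 0) + (if z = y then 1 else 0)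

/-- The generator of the non-conservative (open) SIP. -/
def openGen (c : V → V → ℝ) (α ω θ : V → ℝ) (f : (V → ℕ) → ℝ) (η : V → ℕ) : ℝ :=
  (∑ x, ∑ y, c x y * η x * (α y + η y) * (f (moveFn η x y) - f η))
  + ∑ x, ω x * ((η x : ℝ) * (1 + θ x) * (f (remFn η x) - f η)
      + θ x * (α x + η x) * (f (addFn η x) - f η))

/-- One-site Meixner duality function at density `0`:
`d_{a,0}(m,n) = (n!/(n-m)!) (Γ(a)/Γ(a+m)) 1{m ≤ n}`. -/
def dualD0 (a : ℝ) (m n : ℕ) : ℝ :=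
  if m ≤ n then (Nat.descFactorial n m : ℝ) * (Real.Gamma a / Real.Gamma (a + m)) else 0

/-- One-site Meixner duality function at density `ϱ`. -/
def dualD (a ϱ : ℝ) (m n : ℕ) : ℝ :=
  ∑ l ∈ Finset.range (m + 1), (Nat.choose m l : ℝ) * dualD0 a l n * (-ϱ) ^ (m - l)

/-- The orthogonal duality function `D_{α,ϱ}(ξ,η)`. -/
def dualityFn (α : V → ℝ) (ϱ : ℝ) {k : ℕ} (ξ : Config V k) (η : V → ℕ) : ℝ :=
  ∏ x, dualD (α x) ϱ (ξ.1 x) (η x)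

/-- The polynomial `F_{α,ϱ}^ψ` associated to `ψ : Ξ_k → ℝ`. -/
def liftF (α : V → ℝ) (ϱ : ℝ) {k : ℕ} (ψ : Config V k → ℝ) (η : V → ℕ) : ℝ :=
  ∑ ξ : Config V k, sipMeasure α ξ * ψ ξ * dualityFn α ϱ ξ η

end Defs


end


section AuxLookdown

open Finset

variable {V : Type*} [Fintype V] [DecidableEq V] {k : ℕ}

lemma unlabel_apply (v : Fin k → V) (z : V) :
    (unlabel v).1 z = (Finset.univ.filter fun i => v i = z).card := rfl

lemma unlabel_comp (v : Fin k → V) (σ : Equiv.Perm (Fin k)) :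
    unlabel (fun i => v (σ i)) = unlabel v := by
  apply Subtype.ext; funext z
  show (univ.filter fun i => v (σ i) = z).card = (univ.filter fun i => v i = z).card
  have h : (univ.filter fun i => v (σ i) = z)
      = (univ.filter fun i => v i = z).map σ.symm.toEmbedding := by
    ext i
    simp only [mem_filter, mem_univ, true_and, mem_map, Equiv.coe_toEmbedding]
    constructor
    · intro h; exact ⟨σ i, h, σ.symm_apply_apply i⟩
    · rintro ⟨a, ha, rfl⟩; simpa using ha
  rw [h, Finset.card_map]

lemma card_filter_update (v : Fin k → V) (i : Fin k) (y z : V) :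
    (univ.filter fun j => Function.update v i y j = z).card
      = (univ.filter fun j => v j = z).card
        - (if v i = z then 1 else 0) + (if y = z then 1 else 0) := by
  by_cases hyz : y = z
  · have hset : (univ.filter fun j => Function.update v i y j = z)
        = insert i ((univ.filter fun j => v j = z).erase i) := by
      ext j
      by_cases hj : j = i
      · subst hj; simp [Function.update_self, hyz]
      · simp [Function.update_of_ne hj, hj]
    rw [hset, Finset.card_insert_of_notMem (Finset.notMem_erase _ _),
      Finset.card_erase_eq_ite]
    by_cases hvi : v i = z
    · have hmem : i ∈ univ.filter fun j => v j = z := by simp [hvi]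
      have hpos : 1 ≤ (univ.filter fun j => v j = z).card :=
        Finset.card_pos.2 ⟨i, hmem⟩
      rw [if_pos hmem, if_pos hvi, if_pos hyz]
    · have hmem : i ∉ univ.filter fun j => v j = z := by simp [hvi]
      rw [if_neg hmem, if_neg hvi, if_pos hyz]
      omega
  · have hset : (univ.filter fun j => Function.update v i y j = z)
        = (univ.filter fun j => v j = z).erase i := by
      ext j
      by_cases hj : j = i
      · subst hj; simp [Function.update_self, hyz]
      · simp [Function.update_of_ne hj, hj]
    rw [hset, Finset.card_erase_eq_ite]
    by_cases hvi : v i = z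
    · have hmem : i ∈ univ.filter fun j => v j = z := by simp [hvi]
      have hpos : 1 ≤ (univ.filter fun j => v j = z).card :=
        Finset.card_pos.2 ⟨i, hmem⟩
      rw [if_pos hmem, if_pos hvi, if_neg hyz]
      omega
    · have hmem : i ∉ univ.filter fun j => v j = z := by simp [hvi]
      rw [if_neg hmem, if_neg hvi, if_neg hyz]
      omega

lemma unlabel_update (v : Fin k → V) (i : Fin k) (y : V) :
    unlabel (Function.update v i y) = (unlabel v).move (v i) y := by
  have hne : (unlabel v).1 (v i) ≠ 0 := by
    have hmem : i ∈ univ.filter fun j => v j = v i := by simp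
    exact Finset.card_ne_zero_of_mem hmem
  rw [Config.move]
  refine Eq.trans ?_ (dif_neg hne).symm
  apply Subtype.ext; funext z
  show (univ.filter fun j => Function.update v i y j = z).card
      = (unlabel v).1 z - (if z = v i then 1 else 0) + (if z = y then 1 else 0)
  rw [card_filter_update, unlabel_apply]
  have e1 : (if v i = z then (1:ℕ) else 0) = if z = v i then 1 else 0 := by
    by_cases h : z = v i
    · simp [h]
    · simp [h, Ne.symm h]
  have e2 : (if y = z then (1:ℕ) else 0) = if z = y then 1 else 0 := by
    by_cases h : z = y
    · simp [h]
    · simp [h, Ne.symm h]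
  rw [e1, e2]

lemma unlabel_update_comp (v : Fin k → V) (σ : Equiv.Perm (Fin k)) (i : Fin k) (y : V) :
    unlabel (Function.update (fun t => v (σ t)) i y) = (unlabel v).move (v (σ i)) y := by
  rw [unlabel_update (fun t => v (σ t)) i y, unlabel_comp v σ]

lemma sum_fiber (v : Fin k → V) (g : V → ℝ) :
    ∑ i, g (v i) = ∑ x, ((unlabel v).1 x : ℝ) * g x := by
  have h : ∀ x : V, (∑ i ∈ univ.filter (fun i => v i = x), g (v i))
      = ((unlabel v).1 x : ℝ) * g x := by
    intro x
    rw [unlabel_apply]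
    rw [Finset.sum_congr rfl (fun i hi => by rw [(Finset.mem_filter.1 hi).2])]
    rw [Finset.sum_const, nsmul_eq_mul]
  rw [← Finset.sum_fiberwise_of_maps_to (fun i _ => Finset.mem_univ (v i))
    (fun i => g (v i))]
  exact Finset.sum_congr rfl fun x _ => h x

lemma sum_ind (v : Fin k → V) (x : V) :
    (∑ i, if v i = x then (1:ℝ) else 0) = ((unlabel v).1 x : ℝ) := by
  rw [Finset.sum_boole, unlabel_apply]

lemma pair_sum (v : Fin k → V) {x y : V} (hxy : x ≠ y) :
    (2:ℝ) * ∑ σ : Equiv.Perm (Fin k), ∑ i : Fin k, ∑ j : Fin k,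
        (if (j:ℕ) < (i:ℕ) ∧ v (σ i) = x ∧ v (σ j) = y then (1:ℝ) else 0)
      = (Nat.factorial k : ℝ) * ((unlabel v).1 x : ℝ) * ((unlabel v).1 y : ℝ) := by
  set P : Equiv.Perm (Fin k) → ℝ := fun σ => ∑ i : Fin k, ∑ j : Fin k,
      (if (j:ℕ) < (i:ℕ) ∧ v (σ i) = x ∧ v (σ j) = y then (1:ℝ) else 0) with hP
  set Q : Equiv.Perm (Fin k) → ℝ := fun σ => ∑ i : Fin k, ∑ j : Fin k,
      (if (i:ℕ) < (j:ℕ) ∧ v (σ i) = x ∧ v (σ j) = y then (1:ℝ) else 0) with hQ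
  have hPQ : ∑ σ, P σ = ∑ σ, Q σ := by
    refine Fintype.sum_bijective (fun σ => σ * Fin.revPerm)
      (Group.mulRight_bijective _) P Q (fun σ => ?_)
    rw [hP, hQ]
    simp only
    rw [← Equiv.sum_comp (Fin.revPerm (n := k))
      (fun i => ∑ j : Fin k, (if (j:ℕ) < (i:ℕ) ∧ v (σ i) = x ∧ v (σ j) = y
        then (1:ℝ) else 0))]
    refine Finset.sum_congr rfl fun i _ => ?_
    rw [← Equiv.sum_comp (Fin.revPerm (n := k))
      (fun j => (if (j:ℕ) < ((Fin.revPerm i : Fin k):ℕ) ∧ v (σ (Fin.revPerm i)) = x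
        ∧ v (σ j) = y then (1:ℝ) else 0))]
    refine Finset.sum_congr rfl fun j _ => ?_
    refine if_congr ?_ rfl rfl
    have hrev : ((Fin.revPerm j : Fin k) : ℕ) < ((Fin.revPerm i : Fin k) : ℕ)
        ↔ (i : ℕ) < (j : ℕ) := by
      constructor
      · intro h
        have : (i : Fin k) < j := by
          have h' : (Fin.revPerm j : Fin k) < (Fin.revPerm i : Fin k) := h
          simpa [Fin.revPerm, Fin.rev_lt_rev] using h'
        exact this
      · intro h
        have h' : (i : Fin k) < j := h
        have : (Fin.revPerm j : Fin k) < (Fin.revPerm i : Fin k) := by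
          simpa [Fin.revPerm, Fin.rev_lt_rev] using h'
        exact this
    constructor
    · rintro ⟨h1, h2, h3⟩
      exact ⟨hrev.1 h1, h2, h3⟩
    · rintro ⟨h1, h2, h3⟩
      exact ⟨hrev.2 h1, h2, h3⟩
  have hsplit : ∀ σ : Equiv.Perm (Fin k), P σ + Q σ
      = ((unlabel v).1 x : ℝ) * ((unlabel v).1 y : ℝ) := by
    intro σ
    rw [hP, hQ]
    simp only
    rw [← Finset.sum_add_distrib]
    rw [Finset.sum_congr rfl (fun i _ => (Finset.sum_add_distrib).symm)]
    have key : ∀ i j : Fin k,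
        ((if (j:ℕ) < (i:ℕ) ∧ v (σ i) = x ∧ v (σ j) = y then (1:ℝ) else 0)
          + (if (i:ℕ) < (j:ℕ) ∧ v (σ i) = x ∧ v (σ j) = y then (1:ℝ) else 0))
        = (if v (σ i) = x then (1:ℝ) else 0) * (if v (σ j) = y then 1 else 0) := by
      intro i j
      by_cases hx : v (σ i) = x
      · by_cases hy : v (σ j) = y
        · have hne : (i:ℕ) ≠ (j:ℕ) := by
            intro hval
            have hij : i = j := Fin.ext hval
            rw [hij] at hx
            exact hxy (hx.symm.trans hy)
          rcases lt_or_gt_of_ne hne with h | h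
          · simp [hx, hy, h, Nat.lt_asymm h]
          · simp [hx, hy, h, Nat.lt_asymm h]
        · simp [hy]
      · simp [hx]
    rw [Finset.sum_congr rfl fun i _ => Finset.sum_congr rfl fun j _ => key i j]
    rw [← Finset.sum_mul_sum]
    have h1 : (∑ i, if v (σ i) = x then (1:ℝ) else 0) = ((unlabel v).1 x : ℝ) := by
      rw [sum_ind (fun i => v (σ i)) x, unlabel_comp]
    have h2 : (∑ j, if v (σ j) = y then (1:ℝ) else 0) = ((unlabel v).1 y : ℝ) := by
      rw [sum_ind (fun i => v (σ i)) y, unlabel_comp]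
    rw [h1, h2]
  have hsum2 : ∑ σ, (P σ + Q σ)
      = (Nat.factorial k : ℝ) * ((unlabel v).1 x : ℝ) * ((unlabel v).1 y : ℝ) := by
    rw [Finset.sum_congr rfl fun σ _ => hsplit σ, Finset.sum_const,
      Finset.card_univ, Fintype.card_perm, Fintype.card_fin, nsmul_eq_mul, mul_assoc]
  rw [Finset.sum_add_distrib, ← hPQ] at hsum2
  linarith [hsum2]

lemma coeff_sum (v : Fin k → V) {x y : V} (hxy : x ≠ y) (a : ℝ) :
    (∑ σ : Equiv.Perm (Fin k), ∑ i : Fin k,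
        (if x = v (σ i) then (1:ℝ) else 0)
          * (a + 2 * ∑ j : Fin k, (if (j:ℕ) < (i:ℕ) ∧ v (σ j) = y then (1:ℝ) else 0)))
      = (Nat.factorial k : ℝ) * ((unlabel v).1 x : ℝ) * (a + ((unlabel v).1 y : ℝ)) := by
  have key : ∀ σ : Equiv.Perm (Fin k),
      (∑ i : Fin k, (if x = v (σ i) then (1:ℝ) else 0)
          * (a + 2 * ∑ j : Fin k, (if (j:ℕ) < (i:ℕ) ∧ v (σ j) = y then (1:ℝ) else 0)))
      = a * ((unlabel v).1 x : ℝ)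
        + 2 * ∑ i : Fin k, ∑ j : Fin k,
            (if (j:ℕ) < (i:ℕ) ∧ v (σ i) = x ∧ v (σ j) = y then (1:ℝ) else 0) := by
    intro σ
    have e1 : ∀ i : Fin k, (if x = v (σ i) then (1:ℝ) else 0)
        * (a + 2 * ∑ j : Fin k, (if (j:ℕ) < (i:ℕ) ∧ v (σ j) = y then (1:ℝ) else 0))
        = (if v (σ i) = x then (1:ℝ) else 0) * a
          + 2 * ∑ j : Fin k,
              (if (j:ℕ) < (i:ℕ) ∧ v (σ i) = x ∧ v (σ j) = y then (1:ℝ) else 0) := by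
      intro i
      by_cases h : v (σ i) = x
      · have hx : (if x = v (σ i) then (1:ℝ) else 0) = 1 := if_pos h.symm
        have hcond : ∀ j : Fin k,
            (if (j:ℕ) < (i:ℕ) ∧ v (σ i) = x ∧ v (σ j) = y then (1:ℝ) else 0)
            = (if (j:ℕ) < (i:ℕ) ∧ v (σ j) = y then (1:ℝ) else 0) := fun j => by
          refine if_congr ?_ rfl rfl
          constructor
          · rintro ⟨h1, _, h3⟩; exact ⟨h1, h3⟩
          · rintro ⟨h1, h3⟩; exact ⟨h1, h, h3⟩
        rw [hx, if_pos h,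
          Finset.sum_congr rfl fun j _ => hcond j]
        ring
      · simp [h, Ne.symm h]
    rw [Finset.sum_congr rfl fun i _ => e1 i, Finset.sum_add_distrib]
    congr 1
    · rw [← Finset.sum_mul]
      have h1 : (∑ i, if v (σ i) = x then (1:ℝ) else 0) = ((unlabel v).1 x : ℝ) := by
        rw [sum_ind (fun i => v (σ i)) x, unlabel_comp]
      rw [h1, mul_comm]
    · rw [← Finset.mul_sum]
  rw [Finset.sum_congr rfl fun σ _ => key σ, Finset.sum_add_distrib,
    Finset.sum_const, Finset.card_univ, Fintype.card_perm, Fintype.card_fin,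
    nsmul_eq_mul, ← Finset.mul_sum, pair_sum v hxy]
  ring

end AuxLookdown

theorem lookdown_representation
    {V : Type*} [Fintype V] [DecidableEq V] (c : V → V → ℝ) (α ω : V → ℝ)
    (hsymm : ∀ x y, c x y = c y x) (hnonneg : ∀ x y, 0 ≤ c x y)
    (hloop : ∀ x, c x x = 0)
    (hα : ∀ x, 0 < α x) (hω0 : ∀ x, 0 ≤ ω x)
    (k : ℕ) (hk : 2 ≤ k) (f : Config V k → ℝ) (v : Fin k → V) :
    symmetrize k (lookdownGen c α ω k (fun u => f (unlabel u))) v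
      = killedGen c α ω f (unlabel v) := by
  classical
  have hfac : (Nat.factorial k : ℝ) ≠ 0 := Nat.cast_ne_zero.2 (Nat.factorial_ne_zero k)
  set η := unlabel v with hη
  have step1 : ∀ σ : Equiv.Perm (Fin k),
      lookdownGen c α ω k (fun u => f (unlabel u)) (fun i => v (σ i))
        = (∑ x, ∑ y, c x y * (f (η.move x y) - f η)
            * ∑ i : Fin k, (if x = v (σ i) then (1:ℝ) else 0)
              * (α y + 2 * ∑ j : Fin k,
                  (if (j:ℕ) < (i:ℕ) ∧ v (σ j) = y then (1:ℝ) else 0)))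
          - f η * ∑ x, ω x * ((η.1 x : ℝ)) := by
    intro σ
    simp only [lookdownGen]
    congr 1
    · rw [Finset.sum_comm]
      refine Finset.sum_congr rfl fun x _ => ?_
      rw [Finset.sum_comm]
      refine Finset.sum_congr rfl fun y _ => ?_
      rw [Finset.mul_sum]
      refine Finset.sum_congr rfl fun i _ => ?_
      by_cases h : x = v (σ i)
      · subst h
        rw [unlabel_update_comp v σ i y, unlabel_comp v σ, ← hη]
        ring
      · simp [h]
    · rw [unlabel_comp v σ, ← hη]
      congr 1
      rw [Equiv.sum_comp σ (fun i => ω (v i)), sum_fiber v ω, ← hη]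
      exact Finset.sum_congr rfl fun x _ => mul_comm _ _
  rw [symmetrize]
  rw [Finset.sum_congr rfl fun σ _ => step1 σ]
  rw [Finset.sum_sub_distrib, Finset.sum_const, Finset.card_univ,
    Fintype.card_perm, Fintype.card_fin, nsmul_eq_mul]
  rw [Finset.sum_comm]
  rw [Finset.sum_congr rfl fun x (_ : x ∈ Finset.univ) => Finset.sum_comm]
  rw [Finset.sum_congr rfl fun x (_ : x ∈ Finset.univ) =>
    Finset.sum_congr rfl fun y (_ : y ∈ Finset.univ) => (Finset.mul_sum _ _ _).symm]
  have hxy' : ∀ x y : V, c x y * (f (η.move x y) - f η)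
        * (∑ σ : Equiv.Perm (Fin k), ∑ i : Fin k,
            (if x = v (σ i) then (1:ℝ) else 0)
              * (α y + 2 * ∑ j : Fin k,
                  (if (j:ℕ) < (i:ℕ) ∧ v (σ j) = y then (1:ℝ) else 0)))
      = c x y * (f (η.move x y) - f η)
          * ((Nat.factorial k : ℝ) * ((η.1 x : ℝ)) * (α y + (η.1 y : ℝ))) := by
    intro x y
    by_cases hxy : x = y
    · subst hxy
      rw [hloop]
      ring
    · rw [coeff_sum v hxy (α y), ← hη]
  rw [Finset.sum_congr rfl fun x (_ : x ∈ Finset.univ) =>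
    Finset.sum_congr rfl fun y (_ : y ∈ Finset.univ) => hxy' x y]
  have hmain : (∑ x, ∑ y, c x y * (f (η.move x y) - f η)
        * ((Nat.factorial k : ℝ) * ((η.1 x : ℝ)) * (α y + (η.1 y : ℝ))))
      = (Nat.factorial k : ℝ) * sipGen c α f η := by
    rw [sipGen, Finset.mul_sum]
    refine Finset.sum_congr rfl fun x _ => ?_
    rw [Finset.mul_sum]
    exact Finset.sum_congr rfl fun y _ => by ring
  rw [hmain, killedGen]
  field_simp
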